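/- Let a < b be real numbers and let f : ℝ → ℝ be strictly decreasing and interval-integrable on [0, b−a]. Define the transfer potential K̄(x) = ∫_a^b f(|x−y|) dy for x ∈ [a,b]. Then K̄ is strictly increasing on [a, (a+b)/2] and strictly decreasing on [(a+b)/2, b]. -/

import Mathlib

open MeasureTheory

private lemma tp_key (a b : ℝ) (f : ℝ → ℝ) (hf : StrictAnti f)
    (hint : IntervalIntegrable f volume 0 (b - a)) :
    ∀ x1 x2 : ℝ, a ≤ x1 → x1 < x2 → x2 ≤ b → x1 + x2 < a + b →
    (∫ t in (0:ℝ)..(x1 - a), f t) + (∫ t in (0:ℝ)..(b - x1), f t) <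
    (∫ t in (0:ℝ)..(x2 - a), f t) + (∫ t in (0:ℝ)..(b - x2), f t) := by
  intro x1 x2 h1 h12 h2 hsum
  have hsub : ∀ p q : ℝ, 0 ≤ p → p ≤ b - a → 0 ≤ q → q ≤ b - a →
      IntervalIntegrable f volume p q := by
    intro p q hp hp' hq hq'
    refine hint.mono_set (Set.uIcc_subset_uIcc ?_ ?_) <;>
      rw [Set.uIcc_of_le (by linarith)] <;> exact ⟨by assumption, by assumption⟩
  set c : ℝ := a + b - x1 - x2 with hc
  have hcpos : 0 < c := by rw [hc]; linarith
  have i1 : IntervalIntegrable f volume 0 (x1 - a) := hsub _ _ le_rfl (by linarith) (by linarith) (by linarith)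
  have i2 : IntervalIntegrable f volume 0 (x2 - a) := hsub _ _ le_rfl (by linarith) (by linarith) (by linarith)
  have i3 : IntervalIntegrable f volume 0 (b - x1) := hsub _ _ le_rfl (by linarith) (by linarith) (by linarith)
  have i4 : IntervalIntegrable f volume 0 (b - x2) := hsub _ _ le_rfl (by linarith) (by linarith) (by linarith)
  have iA : IntervalIntegrable f volume (x1 - a) (x2 - a) :=
    hsub _ _ (by linarith) (by linarith) (by linarith) (by linarith)
  have iB : IntervalIntegrable f volume (b - x2) (b - x1) :=
    hsub _ _ (by linarith) (by linarith) (by linarith) (by linarith)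
  have eA : (∫ t in (0:ℝ)..(x2 - a), f t) - ∫ t in (0:ℝ)..(x1 - a), f t
      = ∫ t in (x1 - a)..(x2 - a), f t :=
    intervalIntegral.integral_interval_sub_left i2 i1
  have eB : (∫ t in (0:ℝ)..(b - x1), f t) - ∫ t in (0:ℝ)..(b - x2), f t
      = ∫ t in (b - x2)..(b - x1), f t :=
    intervalIntegral.integral_interval_sub_left i3 i4
  have e1 : x1 - a + c = b - x2 := by rw [hc]; ring
  have e2 : x2 - a + c = b - x1 := by rw [hc]; ring
  have eShift : (∫ t in (b - x2)..(b - x1), f t)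
      = ∫ t in (x1 - a)..(x2 - a), f (t + c) := by
    rw [intervalIntegral.integral_comp_add_right, e1, e2]
  have iShift : IntervalIntegrable (fun t => f (t + c)) volume (x1 - a) (x2 - a) := by
    have h := iB.comp_add_right c
    have e3 : b - x2 - c = x1 - a := by rw [hc]; ring
    have e4 : b - x1 - c = x2 - a := by rw [hc]; ring
    rwa [e3, e4] at h
  have hpos : 0 < ∫ t in (x1 - a)..(x2 - a), (f t - f (t + c)) := by
    refine intervalIntegral.intervalIntegral_pos_of_pos_on (iA.sub iShift) ?_ (by linarith)
    intro t _
    have : f (t + c) < f t := hf (by linarith)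
    linarith
  rw [intervalIntegral.integral_sub iA iShift] at hpos
  rw [← eShift] at hpos
  linarith

/-- **Strict monotonicity of the transfer potential.**
For `a < b` and `f` strictly decreasing and interval-integrable on `[0, b - a]`, the transfer
potential `K̄ x = ∫ y in a..b, f |x - y|` is strictly increasing on `[a, (a + b) / 2]` and
strictly decreasing on `[(a + b) / 2, b]`. -/
theorem transfer_potential_strict_mono_anti
    (a b : ℝ) (hab : a < b) (f : ℝ → ℝ) (hf : StrictAnti f)
    (hint : IntervalIntegrable f volume 0 (b - a)) :
    StrictMonoOn (fun x : ℝ => ∫ y in a..b, f |x - y|) (Set.Icc a ((a + b) / 2)) ∧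
    StrictAntiOn (fun x : ℝ => ∫ y in a..b, f |x - y|) (Set.Icc ((a + b) / 2) b) := by
  have hsub : ∀ p q : ℝ, 0 ≤ p → p ≤ b - a → 0 ≤ q → q ≤ b - a →
      IntervalIntegrable f volume p q := by
    intro p q hp hp' hq hq'
    refine hint.mono_set (Set.uIcc_subset_uIcc ?_ ?_) <;>
      rw [Set.uIcc_of_le (by linarith)] <;> exact ⟨by assumption, by assumption⟩
  have hrep : ∀ x ∈ Set.Icc a b, (∫ y in a..b, f |x - y|)
      = (∫ t in (0:ℝ)..(x - a), f t) + ∫ t in (0:ℝ)..(b - x), f t := by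
    intro x hx
    obtain ⟨hxa, hxb⟩ := hx
    -- left piece
    have il : IntervalIntegrable (fun y => f (x - y)) volume a x := by
      have h := (hsub 0 (x - a) le_rfl (by linarith) (by linarith) (by linarith)).comp_sub_left x
      simpa using h.symm
    have ir : IntervalIntegrable (fun y => f (y - x)) volume x b := by
      have h := (hsub 0 (b - x) le_rfl (by linarith) (by linarith) (by linarith)).comp_sub_right x
      simpa using h
    have eqL : Set.EqOn (fun y => f |x - y|) (fun y => f (x - y)) (Set.uIcc a x) := by
      intro y hy
      rw [Set.uIcc_of_le hxa] at hy
      simp only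
      rw [abs_of_nonneg (by linarith [hy.2])]
    have eqR : Set.EqOn (fun y => f |x - y|) (fun y => f (y - x)) (Set.uIcc x b) := by
      intro y hy
      rw [Set.uIcc_of_le hxb] at hy
      simp only
      rw [abs_of_nonpos (by linarith [hy.1]), neg_sub]
    have ilabs : IntervalIntegrable (fun y => f |x - y|) volume a x :=
      il.congr (fun y hy => (eqL (Set.uIoc_subset_uIcc hy)).symm)
    have irabs : IntervalIntegrable (fun y => f |x - y|) volume x b :=
      ir.congr (fun y hy => (eqR (Set.uIoc_subset_uIcc hy)).symm)
    rw [← intervalIntegral.integral_add_adjacent_intervals ilabs irabs,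
      intervalIntegral.integral_congr eqL, intervalIntegral.integral_congr eqR,
      intervalIntegral.integral_comp_sub_left f x, intervalIntegral.integral_comp_sub_right f x]
    simp
  constructor
  · intro x1 hx1 x2 hx2 h12
    have hx1' : x1 ∈ Set.Icc a b := ⟨hx1.1, by have := hx1.2; linarith⟩
    have hx2' : x2 ∈ Set.Icc a b := ⟨hx2.1, by have := hx2.2; linarith⟩
    simp only [hrep x1 hx1', hrep x2 hx2']
    exact tp_key a b f hf hint x1 x2 hx1.1 h12 hx2'.2
      (by have := hx1.2; have := hx2.2; linarith)
  · intro x1 hx1 x2 hx2 h12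
    have hx1' : x1 ∈ Set.Icc a b := ⟨by have := hx1.1; linarith, hx1.2⟩
    have hx2' : x2 ∈ Set.Icc a b := ⟨by have := hx2.1; linarith, hx2.2⟩
    simp only [hrep x1 hx1', hrep x2 hx2']
    have h := tp_key a b f hf hint (a + b - x2) (a + b - x1)
      (by linarith [hx2.2]) (by linarith) (by linarith [hx1'.1])
      (by have := hx1.1; have := hx2.1; linarith)
    have e1 : a + b - x2 - a = b - x2 := by ring
    have e2 : b - (a + b - x2) = x2 - a := by ring
    have e3 : a + b - x1 - a = b - x1 := by ring
    have e4 : b - (a + b - x1) = x1 - a := by ring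
    rw [e1, e2, e3, e4] at h
    linarith
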